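/- Let K>0, N>1, and suppose Φ:(0,∞)→ℝ is C¹ with Φ' ≤ 0 satisfying -Φ'(t) ≤ KN·(e^{2Kt}(1 - KN/Φ'(0⁺)) - 1)^{-1} for all t>0, where Φ'(0⁺) < 0. Then Φ(0⁺) - Φ(t) ≤ (N/2)·log(1 - (1-e^{-2Kt})·Φ'(0⁺)/(KN)) for all t > 0; in particular, if Φ(t) → 0 as t → ∞, then Φ(0⁺) ≤ (N/2)·log(1 - Φ'(0⁺)/(KN)). -/

import Mathlib

open Set Filter

/-- Integration of the Riccati bound, completing the ODE argument for the
logarithmic entropy-energy inequality: if `Φ` is `C¹` on `(0,∞)` with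
`Φ' ≤ 0`, `-Φ'(t) ≤ KN (e^{2Kt}(1 - KN/d) - 1)⁻¹` where `d = Φ'(0⁺) < 0`,
and `L₀ = Φ(0⁺)`, then `L₀ - Φ(t) ≤ (N/2) log(1 - (1-e^{-2Kt}) d/(KN))`
for all `t > 0`, and if `Φ(t) → 0` as `t → ∞` then
`L₀ ≤ (N/2) log(1 - d/(KN))`. -/
theorem stmt_13 (K N : ℝ) (hK : 0 < K) (hN : 1 < N)
    (Φ : ℝ → ℝ) (hΦ : ContDiffOn ℝ 1 Φ (Ioi 0))
    (hder : ∀ t ∈ Ioi (0 : ℝ), derivWithin Φ (Ioi 0) t ≤ 0)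
    (d : ℝ) (hd : Tendsto (derivWithin Φ (Ioi 0)) (nhdsWithin 0 (Ioi 0)) (nhds d))
    (hdneg : d < 0)
    (hbound : ∀ t ∈ Ioi (0 : ℝ),
      -derivWithin Φ (Ioi 0) t ≤
        K * N * (Real.exp (2 * K * t) * (1 - K * N / d) - 1)⁻¹)
    (L₀ : ℝ) (hL₀ : Tendsto Φ (nhdsWithin 0 (Ioi 0)) (nhds L₀)) :
    (∀ t > (0 : ℝ),
      L₀ - Φ t ≤ (N / 2) *
        Real.log (1 - (1 - Real.exp (-2 * K * t)) * d / (K * N))) ∧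
    (Tendsto Φ atTop (nhds 0) →
      L₀ ≤ (N / 2) * Real.log (1 - d / (K * N))) := by
  have hN0 : (0:ℝ) < N := lt_trans one_pos hN
  have hKN : 0 < K * N := mul_pos hK hN0
  set ψ : ℝ → ℝ := fun t => 1 - (1 - Real.exp (-2 * K * t)) * d / (K * N) with hψdef
  -- positivity of ψ on [0,∞)
  have hψpos : ∀ t : ℝ, 0 ≤ t → 1 ≤ ψ t := by
    intro t ht
    have h1 : Real.exp (-2 * K * t) ≤ 1 := by
      apply Real.exp_le_one_iff.mpr
      nlinarith
    have h2 : 0 ≤ (1 - Real.exp (-2 * K * t)) * (-d) / (K * N) :=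
      div_nonneg (mul_nonneg (by linarith) (by linarith)) (le_of_lt hKN)
    have h3 : (1 - Real.exp (-2 * K * t)) * d / (K * N)
        = -((1 - Real.exp (-2 * K * t)) * (-d) / (K * N)) := by ring
    simp only [hψdef]
    rw [h3]
    linarith
  -- derivative of ψ
  have hψd : ∀ t : ℝ, HasDerivAt ψ (-(2 * Real.exp (-2 * K * t) * d) / N) t := by
    intro t
    have hexp : HasDerivAt (fun s => Real.exp (-2 * K * s)) (Real.exp (-2 * K * t) * (-2 * K)) t := by
      simpa using ((hasDerivAt_id t).const_mul (-2 * K)).exp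
    have h2 : HasDerivAt ψ (-((0 - Real.exp (-2 * K * t) * (-2 * K)) * d / (K * N))) t := by
      exact ((((hasDerivAt_const t (1:ℝ)).sub hexp).mul_const d).div_const (K * N)).const_sub 1
    convert h2 using 1
    field_simp
    ring
  -- the auxiliary function g
  set g : ℝ → ℝ := fun t => Φ t + (N / 2) * Real.log (ψ t) with hgdef
  set g' : ℝ → ℝ := fun t => derivWithin Φ (Ioi 0) t + (N / 2) * ((-(2 * Real.exp (-2 * K * t) * d) / N) / ψ t) with hg'def
  have hint : interior (Ioi (0:ℝ)) = Ioi 0 := interior_Ioi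
  have hgd : ∀ t ∈ Ioi (0:ℝ), HasDerivWithinAt g (g' t) (Ioi 0) t := by
    intro t ht
    have h1 : HasDerivWithinAt Φ (derivWithin Φ (Ioi 0) t) (Ioi 0) t :=
      ((hΦ.differentiableOn one_ne_zero) t ht).hasDerivWithinAt
    have hne : ψ t ≠ 0 := by
      have := hψpos t (le_of_lt ht); linarith
    have h2 : HasDerivAt (fun s => (N / 2) * Real.log (ψ s))
        ((N / 2) * ((-(2 * Real.exp (-2 * K * t) * d) / N) / ψ t)) t :=
      ((hψd t).log hne).const_mul (N / 2)
    exact h1.add h2.hasDerivWithinAt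
  have hg'nonneg : ∀ t ∈ Ioi (0:ℝ), 0 ≤ g' t := by
    intro t ht
    have htpos : (0:ℝ) < t := ht
    have hψt := hψpos t (le_of_lt htpos)
    have hψtpos : 0 < ψ t := by linarith
    have hb := hbound t ht
    -- show the key identity: K*N*(exp(2Kt)*(1-KN/d)-1)⁻¹ = (N/2)*((-(2*exp(-2Kt)*d)/N)/ψ t)
    have hden : 0 < Real.exp (2 * K * t) * (1 - K * N / d) - 1 := by
      have h1 : 1 < Real.exp (2 * K * t) := by
        apply Real.one_lt_exp_iff.mpr (by positivity)
      have h2 : 0 < - (K * N / d) := by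
        have : K * N / d < 0 := div_neg_of_pos_of_neg hKN hdneg
        linarith
      nlinarith
    have hkey : K * N * (Real.exp (2 * K * t) * (1 - K * N / d) - 1)⁻¹
        = (N / 2) * ((-(2 * Real.exp (-2 * K * t) * d) / N) / ψ t) := by
      have he : Real.exp (2 * K * t) * Real.exp (-2 * K * t) = 1 := by
        rw [← Real.exp_add]; norm_num
      have hψt' : ψ t = (K * N - d + d * Real.exp (-2 * K * t)) / (K * N) := by
        simp only [hψdef]; field_simp; ring
      have hd0 : d ≠ 0 := ne_of_lt hdneg
      have he0 : Real.exp (-2 * K * t) ≠ 0 := (Real.exp_pos _).ne'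
      have hnum : K * N - d + d * Real.exp (-2 * K * t) ≠ 0 := by
        have h6 : 0 < (K * N - d + d * Real.exp (-2 * K * t)) / (K * N) := by
          rw [← hψt']; exact hψtpos
        intro h; rw [h] at h6; simp at h6
      have hA : Real.exp (2 * K * t) = (Real.exp (-2 * K * t))⁻¹ := by
        rw [← Real.exp_neg]; ring_nf
      have hden'' : (Real.exp (-2 * K * t))⁻¹ * (1 - K * N / d) - 1 ≠ 0 := by
        rw [← hA]; exact ne_of_gt hden
      rw [hψt', hA]
      have hnum' : K * N - d + d * Real.exp (-(2 * K * t)) ≠ 0 := by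
        rw [show -(2*K*t) = -2*K*t by ring]; exact hnum
      field_simp
      rw [show d - K * N - Real.exp (-(K * 2 * t)) * d = -(K * N - d + Real.exp (-(K * 2 * t)) * d) by ring, div_neg]
    have := hb.trans_eq hkey
    simp only [hg'def]
    linarith
  have hgcont : ContinuousOn g (Ioi 0) := by
    intro t ht
    exact ((hgd t ht).continuousWithinAt)
  have hgmono : MonotoneOn g (Ioi 0) := by
    apply monotoneOn_of_hasDerivWithinAt_nonneg (convex_Ioi 0) hgcont
    · intro x hx; rw [hint] at hx ⊢; exact hgd x hx
    · intro x hx; rw [hint] at hx; exact hg'nonneg x hx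
  -- g tends to L₀ at 0⁺
  have hψcont : Continuous ψ := by
    apply Continuous.sub continuous_const
    exact (((continuous_const.sub (Real.continuous_exp.comp (continuous_const.mul continuous_id))).mul continuous_const).div_const _)
  have hψ0 : ψ 0 = 1 := by simp [hψdef]
  have hglim : Tendsto g (nhdsWithin 0 (Ioi 0)) (nhds L₀) := by
    have h2 : Tendsto (fun t => (N / 2) * Real.log (ψ t)) (nhdsWithin 0 (Ioi 0)) (nhds 0) := by
      have : ContinuousAt (fun t => (N / 2) * Real.log (ψ t)) 0 := by
        apply ContinuousAt.mul continuousAt_const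
        apply (Real.continuousAt_log (by rw [hψ0]; norm_num)).comp hψcont.continuousAt
      have h3 := this.continuousWithinAt (s := Ioi 0)
      simpa [ContinuousWithinAt, hψ0] using h3
    simpa using hL₀.add h2
  -- main inequality
  have hmain : ∀ t > (0:ℝ), L₀ ≤ g t := by
    intro t ht
    apply le_of_tendsto hglim
    filter_upwards [Ioo_mem_nhdsGT_of_mem (by constructor <;> [rfl; exact ht] : (0:ℝ) ∈ Ico 0 t)] with s hs
    exact hgmono hs.1 ht (le_of_lt hs.2)
  constructor
  · intro t ht
    have := hmain t ht
    simp only [hgdef] at this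
    linarith
  · intro hΦtop
    have hlhs : Tendsto (fun t => L₀ - Φ t) atTop (nhds L₀) := by
      simpa using (tendsto_const_nhds (x := L₀)).sub hΦtop
    have hψtop : Tendsto ψ atTop (nhds (1 - d / (K * N))) := by
      have hexp : Tendsto (fun t => Real.exp (-2 * K * t)) atTop (nhds 0) := by
        apply Real.tendsto_exp_comp_nhds_zero.mpr
        exact (tendsto_const_mul_atBot_of_neg (by linarith : -2 * K < 0)).mpr tendsto_id
      have h1 : Tendsto (fun t => 1 - (1 - Real.exp (-2 * K * t)) * d / (K * N)) atTop
          (nhds (1 - (1 - 0) * d / (K * N))) :=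
        tendsto_const_nhds.sub
          (((tendsto_const_nhds.sub hexp).mul_const d).div_const (K * N))
      rw [show (1:ℝ) - (1 - 0) * d / (K * N) = 1 - d / (K * N) by ring] at h1
      exact h1
    have hlog : (0:ℝ) < 1 - d / (K * N) := by
      have : d / (K * N) < 0 := div_neg_of_neg_of_pos hdneg hKN
      linarith
    have hrhs : Tendsto (fun t => (N / 2) * Real.log (ψ t)) atTop
        (nhds ((N / 2) * Real.log (1 - d / (K * N)))) :=
      ((Real.continuousAt_log (ne_of_gt hlog)).tendsto.comp hψtop).const_mul (N / 2)
    apply le_of_tendsto_of_tendsto hlhs hrhs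
    filter_upwards [eventually_gt_atTop (0:ℝ)] with t ht
    have := hmain t ht
    simp only [hgdef, Pi.sub_apply] at this ⊢
    linarith
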